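/- There exists a closed 3-prince's tour on the 8×8 chessboard; that is, the graph whose vertices are the cells of the 8×8 board, with two cells (i,j) and (u,v) adjacent if and only if |i-u|+|j-v| = 3, has a Hamiltonian cycle. -/

import Mathlib

/-- The `k`-prince graph on an `m × n` board: cells `(i,j)` and `(u,v)` are adjacent
iff `|i - u| + |j - v| = k`. -/
def princeGraph (m n k : ℕ) : SimpleGraph (Fin m × Fin n) where
  Adj p q := p ≠ q ∧ |(p.1 : ℤ) - (q.1 : ℤ)| + |(p.2 : ℤ) - (q.2 : ℤ)| = k
  symm := ⟨by
    rintro p q ⟨hne, h⟩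
    refine ⟨hne.symm, ?_⟩
    rw [abs_sub_comm ((q.1 : ℤ)), abs_sub_comm ((q.2 : ℤ))]
    exact h⟩
  loopless := ⟨fun p h => h.1 rfl⟩

instance (m n k : ℕ) : DecidableRel (princeGraph m n k).Adj :=
  fun _ _ => inferInstanceAs (Decidable (_ ∧ _))

def tour : (princeGraph 8 8 3).Walk (0,0) (0,0) :=
  .cons (v := (3,0)) (by decide) <|
  .cons (v := (6,0)) (by decide) <|
  .cons (v := (7,2)) (by decide) <|
  .cons (v := (7,5)) (by decide) <|
  .cons (v := (6,7)) (by decide) <|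
  .cons (v := (3,7)) (by decide) <|
  .cons (v := (0,7)) (by decide) <|
  .cons (v := (0,4)) (by decide) <|
  .cons (v := (0,1)) (by decide) <|
  .cons (v := (2,0)) (by decide) <|
  .cons (v := (1,2)) (by decide) <|
  .cons (v := (1,5)) (by decide) <|
  .cons (v := (2,7)) (by decide) <|
  .cons (v := (0,6)) (by decide) <|
  .cons (v := (0,3)) (by decide) <|
  .cons (v := (1,1)) (by decide) <|
  .cons (v := (4,1)) (by decide) <|
  .cons (v := (7,1)) (by decide) <|
  .cons (v := (5,0)) (by decide) <|
  .cons (v := (6,2)) (by decide) <|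
  .cons (v := (7,0)) (by decide) <|
  .cons (v := (5,1)) (by decide) <|
  .cons (v := (6,3)) (by decide) <|
  .cons (v := (6,6)) (by decide) <|
  .cons (v := (7,4)) (by decide) <|
  .cons (v := (7,7)) (by decide) <|
  .cons (v := (4,7)) (by decide) <|
  .cons (v := (1,7)) (by decide) <|
  .cons (v := (3,6)) (by decide) <|
  .cons (v := (5,7)) (by decide) <|
  .cons (v := (7,6)) (by decide) <|
  .cons (v := (5,5)) (by decide) <|
  .cons (v := (2,5)) (by decide) <|
  .cons (v := (2,2)) (by decide) <|
  .cons (v := (1,0)) (by decide) <|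
  .cons (v := (4,0)) (by decide) <|
  .cons (v := (6,1)) (by decide) <|
  .cons (v := (7,3)) (by decide) <|
  .cons (v := (5,2)) (by decide) <|
  .cons (v := (3,1)) (by decide) <|
  .cons (v := (4,3)) (by decide) <|
  .cons (v := (6,4)) (by decide) <|
  .cons (v := (5,6)) (by decide) <|
  .cons (v := (4,4)) (by decide) <|
  .cons (v := (6,5)) (by decide) <|
  .cons (v := (4,6)) (by decide) <|
  .cons (v := (1,6)) (by decide) <|
  .cons (v := (1,3)) (by decide) <|
  .cons (v := (3,4)) (by decide) <|
  .cons (v := (5,3)) (by decide) <|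
  .cons (v := (3,2)) (by decide) <|
  .cons (v := (0,2)) (by decide) <|
  .cons (v := (0,5)) (by decide) <|
  .cons (v := (3,5)) (by decide) <|
  .cons (v := (2,3)) (by decide) <|
  .cons (v := (2,6)) (by decide) <|
  .cons (v := (1,4)) (by decide) <|
  .cons (v := (3,3)) (by decide) <|
  .cons (v := (4,5)) (by decide) <|
  .cons (v := (2,4)) (by decide) <|
  .cons (v := (5,4)) (by decide) <|
  .cons (v := (4,2)) (by decide) <|
  .cons (v := (2,1)) (by decide) <|
  .cons (by decide) .nil

/-- There exists a closed 3-prince's tour on the 8×8 chessboard. -/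
theorem prince3_tour_8x8 :
    ∃ (v : Fin 8 × Fin 8) (p : (princeGraph 8 8 3).Walk v v), p.IsHamiltonianCycle := by
  refine ⟨(0,0), tour, ?_⟩
  rw [SimpleGraph.Walk.isHamiltonianCycle_iff_isCycle_and_support_count_tail_eq_one,
      SimpleGraph.Walk.isCycle_def, SimpleGraph.Walk.isTrail_def]
  refine ⟨⟨by decide, ?_, by decide⟩, by decide⟩
  intro h
  exact absurd (congrArg SimpleGraph.Walk.length h)
    (by decide : tour.length ≠ SimpleGraph.Walk.nil.length)
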